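/- For α ∈ (0, 1/2), one has sup over all A ≥ 0 and all B ≥ 2 of ∫₀^A |B - v|^(-α) (v^(-α) - (1+v)^(-α)) dv is finite. -/

import Mathlib

open MeasureTheory Real Set

/-- Mean value bound: `v^(-α) - (1+v)^(-α) ≤ α * v^(-1-α)` for `v > 0`. -/
lemma aux_mvt (α : ℝ) (hα0 : 0 < α) (hα1 : α < 1) {v : ℝ} (hv : 0 < v) :
    v ^ (-α) - (1 + v) ^ (-α) ≤ α * v ^ (-1 - α) := by
  have hmem : (0:ℝ) ∉ Set.uIcc v (1 + v) := notMem_uIcc_of_lt hv (by linarith)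
  have hne : (-1 - α) ≠ -1 := by intro h; linarith [sub_eq_iff_eq_add.mp h]
  have hII : IntervalIntegrable (fun t : ℝ => t ^ (-1 - α)) volume v (1 + v) :=
    intervalIntegral.intervalIntegrable_rpow (Or.inr hmem)
  have hInt : (∫ t in v..(1 + v), t ^ (-1 - α))
      = ((1 + v) ^ (-α) - v ^ (-α)) / (-α) := by
    rw [integral_rpow (Or.inr ⟨hne, hmem⟩), show (-1 - α + 1 : ℝ) = -α by ring]
  have hbound : (∫ t in v..(1 + v), t ^ (-1 - α)) ≤ v ^ (-1 - α) := by
    have h1 : (∫ t in v..(1 + v), t ^ (-1 - α))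
        ≤ ∫ _t in v..(1 + v), v ^ (-1 - α) := by
      apply intervalIntegral.integral_mono_on (by linarith) hII intervalIntegrable_const
      intro t ht
      exact rpow_le_rpow_of_nonpos hv ht.1 (by linarith)
    have h2 : (∫ _t in v..(1 + v), v ^ (-1 - α)) = v ^ (-1 - α) := by
      rw [intervalIntegral.integral_const]; simp
    linarith
  have key : v ^ (-α) - (1 + v) ^ (-α) = α * ∫ t in v..(1 + v), t ^ (-1 - α) := by
    rw [hInt]
    have h0 : -α ≠ 0 := by intro h; exact hα0.ne' (neg_eq_zero.mp h)
    field_simp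
    ring
  rw [key]
  exact mul_le_mul_of_nonneg_left hbound hα0.le

theorem stmt_11 (α : ℝ) (hα : α ∈ Set.Ioo (0:ℝ) (1/2)) :
    ∃ M : ℝ, ∀ A : ℝ, 0 ≤ A → ∀ B : ℝ, 2 ≤ B →
      (∫ v in (0:ℝ)..A, |B - v| ^ (-α) * (v ^ (-α) - (1 + v) ^ (-α))) ≤ M := by
  obtain ⟨hα0, hα2⟩ := hα
  have hα1 : α < 1 := by linarith
  have hαne : -α + 1 ≠ 0 := by intro h; linarith
  have hrpow : (-1:ℝ) < -α := by linarith
  have hrpow' : (-1 - α : ℝ) < -1 := by linarith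
  refine ⟨1 / (1 - α) + 1 + α * (1 / (1 - α)) + α * (1 / (1 - α)), ?_⟩
  intro A hA B hB
  set f : ℝ → ℝ := fun v => |B - v| ^ (-α) * (v ^ (-α) - (1 + v) ^ (-α)) with hf
  set g1 : ℝ → ℝ := (Ioc (0:ℝ) 1).indicator (fun v => v ^ (-α)) with hg1
  set g2 : ℝ → ℝ := (Ioi (1:ℝ)).indicator (fun v => α * v ^ (-1 - α)) with hg2
  set g3 : ℝ → ℝ := (Ioo (B - 1) B).indicator (fun v => α * (B - v) ^ (-α)) with hg3
  set g4 : ℝ → ℝ := (Ico B (B + 1)).indicator (fun v => α * (v - B) ^ (-α)) with hg4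
  set G : ℝ → ℝ := fun v => g1 v + g2 v + g3 v + g4 v with hG
  -- nonnegativity of the pieces
  have hg1n : ∀ v, 0 ≤ g1 v := fun v =>
    Set.indicator_nonneg (fun x hx => rpow_nonneg hx.1.le _) v
  have hg2n : ∀ v, 0 ≤ g2 v := fun v =>
    Set.indicator_nonneg (fun x hx => mul_nonneg hα0.le (rpow_nonneg (by linarith [hx.out]) _)) v
  have hg3n : ∀ v, 0 ≤ g3 v := fun v =>
    Set.indicator_nonneg (fun x hx => mul_nonneg hα0.le (rpow_nonneg (by linarith [hx.2]) _)) v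
  have hg4n : ∀ v, 0 ≤ g4 v := fun v =>
    Set.indicator_nonneg (fun x hx => mul_nonneg hα0.le (rpow_nonneg (by linarith [hx.1]) _)) v
  have hGn : ∀ v, 0 ≤ G v := fun v => by
    have := hg1n v; have := hg2n v; have := hg3n v; have := hg4n v
    simp only [hG]; linarith
  -- integrability of the pieces
  have hI1 : IntegrableOn (fun v : ℝ => v ^ (-α)) (Ioc (0:ℝ) 1) := by
    have := intervalIntegral.intervalIntegrable_rpow' (a := 0) (b := 1) hrpow
    exact (intervalIntegrable_iff_integrableOn_Ioc_of_le zero_le_one).mp this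
  have hint1 : Integrable g1 := hI1.integrable_indicator measurableSet_Ioc
  have hI2 : IntegrableOn (fun v : ℝ => α * v ^ (-1 - α)) (Ioi (1:ℝ)) :=
    (integrableOn_Ioi_rpow_of_lt hrpow' one_pos).const_mul α
  have hint2 : Integrable g2 := hI2.integrable_indicator measurableSet_Ioi
  have hI3 : IntegrableOn (fun v : ℝ => α * (B - v) ^ (-α)) (Ioo (B - 1) B) := by
    have h0 : IntervalIntegrable (fun v : ℝ => v ^ (-α)) volume 0 1 :=
      intervalIntegral.intervalIntegrable_rpow' hrpow
    have h1 : IntervalIntegrable (fun v : ℝ => (B - v) ^ (-α)) volume (B - 1) B := by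
      simpa using (h0.comp_sub_left B).symm
    have h2 := (intervalIntegrable_iff_integrableOn_Ioc_of_le (by linarith : B - 1 ≤ B)).mp h1
    exact (h2.mono_set Ioo_subset_Ioc_self).const_mul α
  have hint3 : Integrable g3 := hI3.integrable_indicator measurableSet_Ioo
  have hI4 : IntegrableOn (fun v : ℝ => α * (v - B) ^ (-α)) (Ico B (B + 1)) := by
    have h0 : IntervalIntegrable (fun v : ℝ => v ^ (-α)) volume 0 1 :=
      intervalIntegral.intervalIntegrable_rpow' hrpow
    have h1 : IntervalIntegrable (fun v : ℝ => (v - B) ^ (-α)) volume B (B + 1) := by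
      simpa [add_comm] using h0.comp_sub_right B
    have h2 := (intervalIntegrable_iff_integrableOn_Ioc_of_le (by linarith : B ≤ B + 1)).mp h1
    have h3 : IntegrableOn (fun v : ℝ => (v - B) ^ (-α)) (Icc B (B + 1)) :=
      (integrableOn_Icc_iff_integrableOn_Ioc (ha := enorm_ne_top)).mpr h2
    exact (h3.mono_set Ico_subset_Icc_self).const_mul α
  have hint4 : Integrable g4 := hI4.integrable_indicator measurableSet_Ico
  have hintG : Integrable G := ((hint1.add hint2).add hint3).add hint4
  -- pointwise bound f v ≤ G v for v > 0
  have hle : ∀ v : ℝ, 0 < v → f v ≤ G v := by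
    intro v hv
    have hGv : G v = g1 v + g2 v + g3 v + g4 v := rfl
    have habs : (0:ℝ) ≤ |B - v| ^ (-α) := rpow_nonneg (abs_nonneg _) _
    have hdiff : 0 ≤ v ^ (-α) - (1 + v) ^ (-α) :=
      sub_nonneg.2 (rpow_le_rpow_of_nonpos hv (by linarith) (by linarith))
    have hmvt := aux_mvt α hα0 hα1 hv
    rcases le_or_gt 1 |B - v| with h1 | h1
    · have hb1 : |B - v| ^ (-α) ≤ 1 := rpow_le_one_of_one_le_of_nonpos h1 (by linarith)
      have hfh : f v ≤ v ^ (-α) - (1 + v) ^ (-α) := by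
        calc f v ≤ 1 * (v ^ (-α) - (1 + v) ^ (-α)) :=
              mul_le_mul_of_nonneg_right hb1 hdiff
          _ = _ := one_mul _
      rcases le_or_gt v 1 with h2 | h2
      · have : v ^ (-α) - (1 + v) ^ (-α) ≤ g1 v := by
          have hmem1 : v ∈ Ioc (0:ℝ) 1 := ⟨hv, h2⟩
          have e : g1 v = v ^ (-α) := Set.indicator_of_mem hmem1 _
          have : (0:ℝ) ≤ (1 + v) ^ (-α) := rpow_nonneg (by linarith) _
          rw [e]; linarith
        have := hg2n v; have := hg3n v; have := hg4n v
        rw [hGv]; linarith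
      · have : v ^ (-α) - (1 + v) ^ (-α) ≤ g2 v := by
          have hmem2 : v ∈ Ioi (1:ℝ) := h2
          have e : g2 v = α * v ^ (-1 - α) := Set.indicator_of_mem hmem2 _
          rw [e]; exact hmvt
        have := hg1n v; have := hg3n v; have := hg4n v
        rw [hGv]; linarith
    · have habs' := abs_lt.mp h1
      have hv1 : (1:ℝ) < v := by linarith
      have hsmall : v ^ (-α) - (1 + v) ^ (-α) ≤ α := by
        have h3 : v ^ (-1 - α) ≤ 1 := rpow_le_one_of_one_le_of_nonpos hv1.le (by linarith)
        calc v ^ (-α) - (1 + v) ^ (-α) ≤ α * v ^ (-1 - α) := hmvt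
          _ ≤ α * 1 := mul_le_mul_of_nonneg_left h3 hα0.le
          _ = α := mul_one α
      have hfb : f v ≤ |B - v| ^ (-α) * α :=
        mul_le_mul_of_nonneg_left hsmall habs
      rcases lt_trichotomy v B with hvB | hvB | hvB
      · have hmem : v ∈ Ioo (B - 1) B := ⟨by linarith, hvB⟩
        have : f v ≤ g3 v := by
          have e : g3 v = α * (B - v) ^ (-α) := Set.indicator_of_mem hmem _
          have habs2 : |B - v| = B - v := abs_of_pos (by linarith)
          rw [habs2] at hfb; rw [e]; linarith
        have := hg1n v; have := hg2n v; have := hg4n v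
        rw [hGv]; linarith
      · subst hvB
        have : f v = 0 := by
          rw [hf]; simp [zero_rpow (by intro h; exact absurd (neg_eq_zero.mp h) hα0.ne')]
        rw [this]; exact hGn v
      · have hmem : v ∈ Ico B (B + 1) := ⟨hvB.le, by linarith⟩
        have : f v ≤ g4 v := by
          have e : g4 v = α * (v - B) ^ (-α) := Set.indicator_of_mem hmem _
          have habs2 : |B - v| = v - B := by rw [abs_of_neg (by linarith : B - v < 0)]; ring
          rw [habs2] at hfb; rw [e]; linarith
        have := hg1n v; have := hg2n v; have := hg3n v
        rw [hGv]; linarith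
  -- main chain
  have step1 : (∫ v in (0:ℝ)..A, f v) = ∫ v in Ioc (0:ℝ) A, f v :=
    intervalIntegral.integral_of_le hA
  have step2 : (∫ v in Ioc (0:ℝ) A, f v) ≤ ∫ v in Ioc (0:ℝ) A, G v := by
    apply integral_mono_of_nonneg
    · exact (ae_restrict_iff' measurableSet_Ioc).mpr
        (Filter.Eventually.of_forall fun v hv => by
          have habs : (0:ℝ) ≤ |B - v| ^ (-α) := rpow_nonneg (abs_nonneg _) _
          have hdiff : 0 ≤ v ^ (-α) - (1 + v) ^ (-α) :=
            sub_nonneg.2 (rpow_le_rpow_of_nonpos hv.1 (by linarith) (by linarith))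
          exact mul_nonneg habs hdiff)
    · exact hintG.integrableOn
    · exact (ae_restrict_iff' measurableSet_Ioc).mpr
        (Filter.Eventually.of_forall fun v hv => hle v hv.1)
  have step3 : (∫ v in Ioc (0:ℝ) A, G v) ≤ ∫ v in Ioi (0:ℝ), G v :=
    setIntegral_mono_set hintG.integrableOn
      (Filter.Eventually.of_forall fun v => hGn v)
      (HasSubset.Subset.eventuallyLE Ioc_subset_Ioi_self)
  have hsplit : (∫ v in Ioi (0:ℝ), G v)
      = (∫ v in Ioi (0:ℝ), g1 v) + (∫ v in Ioi (0:ℝ), g2 v)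
        + (∫ v in Ioi (0:ℝ), g3 v) + (∫ v in Ioi (0:ℝ), g4 v) := by
    have hint12 : Integrable (fun v => g1 v + g2 v) volume := hint1.add hint2
    have hint123 : Integrable (fun v => g1 v + g2 v + g3 v) volume := hint12.add hint3
    have hrfl : (∫ v in Ioi (0:ℝ), G v) = ∫ v in Ioi (0:ℝ), (g1 v + g2 v + g3 v + g4 v) := rfl
    rw [hrfl]
    rw [integral_add hint123.integrableOn hint4.integrableOn,
      integral_add hint12.integrableOn hint3.integrableOn,
      integral_add hint1.integrableOn hint2.integrableOn]
  have base : (∫ v in (0:ℝ)..1, v ^ (-α)) = 1 / (1 - α) := by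
    rw [integral_rpow (Or.inl hrpow)]
    rw [one_rpow, zero_rpow hαne]
    congr 1 <;> ring
  have e1 : (∫ v in Ioi (0:ℝ), g1 v) = 1 / (1 - α) := by
    rw [hg1, setIntegral_indicator measurableSet_Ioc,
      (inter_eq_right.mpr Ioc_subset_Ioi_self : Ioi (0:ℝ) ∩ Ioc 0 1 = Ioc (0:ℝ) 1),
      ← intervalIntegral.integral_of_le zero_le_one]
    exact base
  have e2 : (∫ v in Ioi (0:ℝ), g2 v) = 1 := by
    rw [hg2, setIntegral_indicator measurableSet_Ioi,
      (inter_eq_right.mpr (fun x hx => mem_Ioi.mpr (lt_trans one_pos (mem_Ioi.mp hx))) : Ioi (0:ℝ) ∩ Ioi 1 = Ioi (1:ℝ))]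
    rw [MeasureTheory.integral_const_mul, integral_Ioi_rpow_of_lt hrpow' one_pos, one_rpow,
      show (-1 - α + 1 : ℝ) = -α by ring]
    field_simp
  have e3 : (∫ v in Ioi (0:ℝ), g3 v) = α * (1 / (1 - α)) := by
    rw [hg3, setIntegral_indicator measurableSet_Ioo,
      (by rw [inter_eq_right]; intro x hx; exact lt_trans (by linarith : (0:ℝ) < B - 1) hx.1 :
        Ioi (0:ℝ) ∩ Ioo (B - 1) B = Ioo (B - 1) B)]
    rw [← integral_Ioc_eq_integral_Ioo,
      ← intervalIntegral.integral_of_le (by linarith : B - 1 ≤ B),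
      intervalIntegral.integral_const_mul]
    have hcomp : (∫ v in (B - 1)..B, (B - v) ^ (-α)) = ∫ v in (0:ℝ)..1, v ^ (-α) := by
      rw [intervalIntegral.integral_comp_sub_left (fun u : ℝ => u ^ (-α)) B]
      norm_num
    rw [hcomp, base]
  have e4 : (∫ v in Ioi (0:ℝ), g4 v) = α * (1 / (1 - α)) := by
    rw [hg4, setIntegral_indicator measurableSet_Ico,
      (by rw [inter_eq_right]; intro x hx; exact lt_of_lt_of_le (by linarith : (0:ℝ) < B) hx.1 :
        Ioi (0:ℝ) ∩ Ico B (B + 1) = Ico B (B + 1))]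
    rw [integral_Ico_eq_integral_Ioo, ← integral_Ioc_eq_integral_Ioo,
      ← intervalIntegral.integral_of_le (by linarith : B ≤ B + 1),
      intervalIntegral.integral_const_mul]
    have hcomp : (∫ v in B..(B + 1), (v - B) ^ (-α)) = ∫ v in (0:ℝ)..1, v ^ (-α) := by
      rw [intervalIntegral.integral_comp_sub_right (fun u : ℝ => u ^ (-α)) B]
      norm_num
    rw [hcomp, base]
  calc (∫ v in (0:ℝ)..A, f v) = ∫ v in Ioc (0:ℝ) A, f v := step1
    _ ≤ ∫ v in Ioc (0:ℝ) A, G v := step2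
    _ ≤ ∫ v in Ioi (0:ℝ), G v := step3
    _ = 1 / (1 - α) + 1 + α * (1 / (1 - α)) + α * (1 / (1 - α)) := by
        rw [hsplit, e1, e2, e3, e4]
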